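/- Suppose k ≤ p^{mt} − p^{m(t−1)} and let f be a polynomial over F of degree at most k−1. Then for every u ∈ F the following identity holds in B: Tr(u·f(0)) + Σ_{α∈F∖{0}} Tr(u·α)·Tr(f(α)/α) = 0. -/

import Mathlib

/-- Sum of `α ^ n` over nonzero elements of a finite field, for `n < q - 1`. -/
lemma sum_pow_sdiff_aux {K : Type} [Field K] [Fintype K] [DecidableEq K] (n : ℕ)
    (h : n < Fintype.card K - 1) :
    ∑ α ∈ Finset.univ \ {(0 : K)}, α ^ n = -(if n = 0 then (1 : K) else 0) := by
  have hsub : ({(0 : K)} : Finset K) ⊆ Finset.univ := Finset.subset_univ _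
  rw [Finset.sum_sdiff_eq_sub hsub, FiniteField.sum_pow_lt_card_sub_one K n h,
    Finset.sum_singleton, zero_sub]
  congr 1
  rcases Nat.eq_zero_or_pos n with rfl | hn
  · simp
  · simp [hn.ne']

/-- Trace-repair parity check of the Guruswami–Wootters scheme:
if `k ≤ p^{mt} − p^{m(t−1)}` and `deg f ≤ k − 1`, then for every `u ∈ F`,
`Tr(u·f(0)) + Σ_{α ≠ 0} Tr(u·α)·Tr(f(α)/α) = 0` in `B`. -/
theorem stmt_1 (p m t k : ℕ) (hp : p.Prime) (hm : 1 ≤ m) (ht : 1 ≤ t) (hk : 1 ≤ k)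
    (B F : Type) [Field B] [Field F] [Fintype B] [Fintype F] [Algebra B F]
    [DecidableEq F]
    (hcardB : Fintype.card B = p ^ m) (hcardF : Fintype.card F = p ^ (m * t))
    (Tr : F → B)
    (hTr : ∀ x : F, algebraMap B F (Tr x) = ∑ i ∈ Finset.range t, x ^ p ^ (m * i))
    (hkbd : k ≤ p ^ (m * t) - p ^ (m * (t - 1)))
    (f : Polynomial F)
    (hf : f.degree ≤ ((k - 1 : ℕ) : WithBot ℕ)) :
    ∀ u : F,
      Tr (u * f.eval 0) +
        ∑ α ∈ Finset.univ \ {0}, Tr (u * α) * Tr (f.eval α / α) = 0 := by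
  classical
  -- characteristic of F is p
  haveI hFact : Fact p.Prime := ⟨hp⟩
  have hcharF : CharP F p := by
    have h1 : CharP F (ringChar F) := ringChar.charP F
    have hr : (ringChar F).Prime := CharP.char_is_prime F (ringChar F)
    have hdvd : ringChar F ∣ Fintype.card F := by
      rw [← CharP.cast_eq_zero_iff F (ringChar F) (Fintype.card F)]
      exact FiniteField.cast_card_eq_zero F
    rw [hcardF] at hdvd
    have : ringChar F = p :=
      (Nat.prime_dvd_prime_iff_eq hr hp).mp (hr.dvd_of_dvd_pow hdvd)
    rwa [this] at h1
  haveI := hcharF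
  haveI : ExpChar F p := ExpChar.prime hp
  intro u
  -- elements of the image of B are fixed by q-power Frobenius
  have hfix : ∀ (a : B) (j : ℕ), (algebraMap B F a) ^ p ^ (m * j) = algebraMap B F a := by
    intro a j
    rw [← map_pow, pow_mul, ← hcardB, FiniteField.pow_card_pow]
  -- natDegree bound
  have hnd : f.natDegree < k := by
    have := Polynomial.natDegree_le_of_degree_le hf
    omega
  -- key computation in F
  have hkey : u * f.eval 0 +
      ∑ α ∈ Finset.univ \ {(0 : F)},
        (algebraMap B F (Tr (u * α))) * (f.eval α / α) = 0 := by
    have hsum : ∀ α ∈ Finset.univ \ {(0 : F)},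
        (algebraMap B F (Tr (u * α))) * (f.eval α / α)
          = ∑ i ∈ Finset.range t, ∑ d ∈ Finset.range k,
              u ^ p ^ (m * i) * f.coeff d * α ^ (p ^ (m * i) - 1 + d) := by
      intro α hα
      have hα0 : α ≠ 0 := by
        simpa [Finset.mem_sdiff] using hα
      rw [hTr, Finset.sum_mul]
      refine Finset.sum_congr rfl fun i _ => ?_
      have hpe : 1 ≤ p ^ (m * i) := Nat.one_le_pow _ _ hp.pos
      have heval : f.eval α = ∑ d ∈ Finset.range k, f.coeff d * α ^ d :=
        Polynomial.eval_eq_sum_range' hnd α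
      have hq1 : α ^ p ^ (m * i) * α⁻¹ = α ^ (p ^ (m * i) - 1) := by
        rw [← pow_sub_one_mul (by positivity : p ^ (m * i) ≠ 0) α,
          mul_assoc, mul_inv_cancel₀ hα0, mul_one]
      rw [heval, mul_pow, div_eq_mul_inv, Finset.sum_mul, Finset.mul_sum]
      refine Finset.sum_congr rfl fun d _ => ?_
      rw [pow_add, ← hq1]
      ring
    rw [Finset.sum_congr rfl hsum, Finset.sum_comm]
    -- now sum over i of sums over d of sums over α
    have hinner : ∀ i ∈ Finset.range t,
        ∑ α ∈ Finset.univ \ {(0 : F)}, ∑ d ∈ Finset.range k,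
            u ^ p ^ (m * i) * f.coeff d * α ^ (p ^ (m * i) - 1 + d)
          = if i = 0 then -(u * f.eval 0) else 0 := by
      intro i hi
      rw [Finset.sum_comm]
      have hi' : i < t := Finset.mem_range.mp hi
      have hbd : ∀ d ∈ Finset.range k, p ^ (m * i) - 1 + d < Fintype.card F - 1 := by
        intro d hd
        have hd' : d < k := Finset.mem_range.mp hd
        have h1 : p ^ (m * i) ≤ p ^ (m * (t - 1)) :=
          Nat.pow_le_pow_right hp.pos (by
            exact Nat.mul_le_mul_left m (by omega))
        have h2 : p ^ (m * (t - 1)) ≤ p ^ (m * t) :=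
          Nat.pow_le_pow_right hp.pos (Nat.mul_le_mul_left m (by omega))
        have hpe : 1 ≤ p ^ (m * i) := Nat.one_le_pow _ _ hp.pos
        rw [hcardF]
        omega
      have hstep : ∀ d ∈ Finset.range k,
          ∑ α ∈ Finset.univ \ {(0 : F)},
              u ^ p ^ (m * i) * f.coeff d * α ^ (p ^ (m * i) - 1 + d)
            = u ^ p ^ (m * i) * f.coeff d *
                -(if p ^ (m * i) - 1 + d = 0 then (1 : F) else 0) := by
        intro d hd
        rw [← Finset.mul_sum, sum_pow_sdiff_aux _ (hbd d hd)]
      rw [Finset.sum_congr rfl hstep]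
      by_cases hi0 : i = 0
      · subst hi0
        rw [if_pos rfl]
        have h0mem : 0 ∈ Finset.range k := Finset.mem_range.mpr hk
        rw [Finset.sum_eq_single_of_mem 0 h0mem]
        · simp [Polynomial.coeff_zero_eq_eval_zero]
        · intro d _ hd0
          have h1 : p ^ (m * 0) = 1 := by rw [Nat.mul_zero, pow_zero]
          rw [if_neg (by omega : ¬(p ^ (m * 0) - 1 + d = 0))]
          simp
      · rw [if_neg hi0]
        apply Finset.sum_eq_zero
        intro d _
        have hpi : 1 < p ^ (m * i) := by
          apply Nat.one_lt_pow
          · positivity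
          · exact hp.one_lt
        have : p ^ (m * i) - 1 + d ≠ 0 := by omega
        rw [if_neg this]
        simp
    rw [Finset.sum_congr rfl hinner, Finset.sum_ite_eq' (Finset.range t) 0
      (fun _ => -(u * f.eval 0)), if_pos (Finset.mem_range.mpr ht)]
    ring
  -- now deduce the result in B via injectivity of algebraMap
  apply (algebraMap B F).injective
  rw [map_add, map_zero, map_sum]
  -- rewrite each product term
  have hterm : ∀ α ∈ Finset.univ \ {(0 : F)},
      algebraMap B F (Tr (u * α) * Tr (f.eval α / α))
        = ∑ j ∈ Finset.range t,
            iterateFrobenius F p (m * j) (algebraMap B F (Tr (u * α)) * (f.eval α / α)) := by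
    intro α _
    rw [map_mul]
    conv_lhs => rw [hTr (f.eval α / α)]
    rw [Finset.mul_sum]
    refine Finset.sum_congr rfl fun j _ => ?_
    rw [iterateFrobenius_def, mul_pow, hfix]
  rw [Finset.sum_congr rfl hterm, Finset.sum_comm, hTr]
  have : ∀ j ∈ Finset.range t,
      (u * f.eval 0) ^ p ^ (m * j) = iterateFrobenius F p (m * j) (u * f.eval 0) := by
    intro j _; rw [iterateFrobenius_def]
  rw [Finset.sum_congr rfl this, ← Finset.sum_add_distrib]
  apply Finset.sum_eq_zero
  intro j _
  rw [← map_sum, ← map_add, hkey, map_zero]
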